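/- For the i.i.d. Bernoulli walk, if S(k) denotes the number of 1's among the first k coordinates (each coordinate being 1 with probability q and 0 with probability p = 1-q), X(k) = k - S(k), and liminf_n b_n/n > q/p for a nondecreasing barrier b, then with positive probability S(k) ≤ b_{1+X(k)} for all k ≥ 0. -/

import Mathlib

open MeasureTheory ProbabilityTheory

/-- `walkS X k ω` is the number of up-moves (`true`s) among the first `k+1` coordinates. -/
def walkS {Ω : Type*} (X : ℕ → Ω → Bool) (k : ℕ) (ω : Ω) : ℕ :=
  ∑ j ∈ Finset.range (k + 1), (X j ω).toNat

/-- `walkX X k ω = k - walkS X k ω` is the horizontal coordinate of the lattice path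
(started at `(-1,0)`) after `k+1` steps. -/
def walkX {Ω : Type*} (X : ℕ → Ω → Bool) (k : ℕ) (ω : Ω) : ℤ :=
  (k : ℤ) - (walkS X k ω : ℤ)

open scoped Classical in
/-- Two Bernoulli random variables with the same success probability are
identically distributed. -/
lemma bern_ident {Ω : Type*} [MeasurableSpace Ω] (μ : Measure Ω) [IsProbabilityMeasure μ]
    {f g : Ω → Bool} (hf : Measurable f) (hg : Measurable g) {c : ENNReal}
    (hfc : μ {ω | f ω = true} = c) (hgc : μ {ω | g ω = true} = c) :
    IdentDistrib f g μ μ := by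
  refine ⟨hf.aemeasurable, hg.aemeasurable, ?_⟩
  have key : ∀ (h : Ω → Bool), Measurable h → μ {ω | h ω = true} = c →
      ∀ s : Set Bool, μ (h ⁻¹' s) =
        if true ∈ s then (if false ∈ s then 1 else c)
        else (if false ∈ s then 1 - c else 0) := by
    intro h hh hc s
    have hpt : h ⁻¹' {true} = {ω | h ω = true} := rfl
    by_cases ht : true ∈ s <;> by_cases hfs : false ∈ s
    · have : s = Set.univ := by ext b; cases b <;> simp [ht, hfs]
      rw [this, Set.preimage_univ, measure_univ]; simp [ht, hfs]
    · have : s = {true} := by ext b; cases b <;> simp [ht, hfs]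
      rw [this, hpt, hc]; simp [ht, hfs]
    · have hse : s = {false} := by ext b; cases b <;> simp [ht, hfs]
      have hcompl : h ⁻¹' {false} = (h ⁻¹' {true})ᶜ := by
        ext ω; cases hh' : h ω <;> simp [hh']
      rw [hse, hcompl, measure_compl (hpt ▸ (hh (measurableSet_singleton true)))
          (measure_ne_top μ _), hpt, hc]
      simp [ht, hfs]
    · have : s = ∅ := by ext b; cases b <;> simp [ht, hfs]
      simp [this, ht, hfs]
  refine Measure.ext fun s hs => ?_
  rw [Measure.map_apply hf hs, Measure.map_apply hg hs, key f hf hfc s, key g hg hgc s]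

/-- SLLN step: with positive probability, from index `K'` on, the partial sums of the
shifted sequence stay below the line of slope `α > q`. -/
lemma slln_part {Ω : Type*} [MeasurableSpace Ω] (μ : Measure Ω) [IsProbabilityMeasure μ]
    (q : ℝ) (hq : q ∈ Set.Ioo (0 : ℝ) 1)
    (X : ℕ → Ω → Bool) (hmeas : ∀ i, Measurable (X i))
    (hindep : iIndepFun X μ)
    (hdist : ∀ i, μ {ω | X i ω = true} = ENNReal.ofReal q)
    (K : ℕ) (α : ℝ) (hqα : q < α) :
    ∃ K' : ℕ, 0 < μ {ω | ∀ j, K' ≤ j →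
      (∑ i ∈ Finset.range (j+1), ((X (K+i) ω).toNat : ℝ)) ≤ α * ((j+1 : ℕ) : ℝ)} := by
  set Y : ℕ → Ω → ℝ := fun i ω => ((X (K+i) ω).toNat : ℝ) with hY
  have hφ : Measurable (fun b : Bool => (b.toNat : ℝ)) := measurable_from_top
  have hYmeas : ∀ i, Measurable (Y i) := fun i => hφ.comp (hmeas (K+i))
  have hind : ∀ i, {ω | X (K+i) ω = true}.indicator (fun _ => (1:ℝ)) = Y i := by
    intro i; ext ω
    cases hx : X (K+i) ω <;> simp [Y, Set.indicator_apply, hx]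
  have hsm : ∀ i, MeasurableSet {ω | X (K+i) ω = true} :=
    fun i => hmeas (K+i) (measurableSet_singleton true)
  have hint : Integrable (Y 0) μ := by
    rw [← hind 0]; exact (integrable_const (1:ℝ)).indicator (hsm 0)
  have hpair : Pairwise (Function.onFun (fun x1 x2 => IndepFun x1 x2 μ) Y) := by
    intro i j hij
    exact (hindep.indepFun (show K+i ≠ K+j by omega)).comp hφ hφ
  have hident : ∀ i, IdentDistrib (Y i) (Y 0) μ μ := by
    intro i
    exact (bern_ident μ (hmeas (K+i)) (hmeas (K+0)) (hdist (K+i)) (hdist (K+0))).comp hφ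
  have hEY : (∫ ω, Y 0 ω ∂μ) = q := by
    rw [← hind 0, integral_indicator_const (1:ℝ) (hsm 0), measureReal_def, hdist (K+0),
      ENNReal.toReal_ofReal hq.1.le, smul_eq_mul, mul_one]
  have hSLLN := strong_law_ae_real Y hint hpair hident
  rw [hEY] at hSLLN
  set B : ℕ → Set Ω := fun m => {ω | ∀ j, m ≤ j →
      (∑ i ∈ Finset.range (j+1), Y i ω) ≤ α * ((j+1 : ℕ) : ℝ)} with hB
  have hae : ∀ᵐ ω ∂μ, ∃ m, ω ∈ B m := by
    filter_upwards [hSLLN] with ω hω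
    have hev := hω.eventually (eventually_lt_nhds hqα)
    rw [Filter.eventually_atTop] at hev
    obtain ⟨n₀, hn₀⟩ := hev
    refine ⟨n₀, fun j hj => ?_⟩
    have h1 : (∑ i ∈ Finset.range (j+1), Y i ω) / ((j+1 : ℕ) : ℝ) < α := hn₀ (j+1) (by omega)
    have h2 : (0:ℝ) < ((j+1 : ℕ) : ℝ) := by positivity
    rw [div_lt_iff₀ h2] at h1
    linarith [h1]
  by_contra hcon
  push_neg at hcon
  have h0 : μ (⋃ m, B m) = 0 := measure_iUnion_null fun m => le_antisymm (hcon m) zero_le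
  have hae2 : ∀ᵐ ω ∂μ, ω ∈ ⋃ m, B m := hae.mono fun ω ⟨m, hm⟩ => Set.mem_iUnion.2 ⟨m, hm⟩
  have h1 : μ (⋃ m, B m)ᶜ = 0 := by
    have h := MeasureTheory.ae_iff.mp hae2
    have he : (⋃ m, B m)ᶜ = {a | ¬ a ∈ ⋃ m, B m} := rfl
    rw [he]; exact h
  have : (1 : ENNReal) ≤ 0 := by
    calc (1:ENNReal) = μ Set.univ := (measure_univ).symm
      _ ≤ μ (⋃ m, B m) + μ (⋃ m, B m)ᶜ := by
          rw [← Set.union_compl_self (⋃ m, B m)]; exact measure_union_le _ _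
      _ = 0 := by rw [h0, h1, add_zero]
  simp at this

/-- Independence of the two block events, and positivity of the measure of the
"first `L` coordinates are all `false`" event. -/
lemma indep_part {Ω : Type*} [MeasurableSpace Ω] (μ : Measure Ω) [IsProbabilityMeasure μ]
    (q : ℝ) (hq : q ∈ Set.Ioo (0 : ℝ) 1)
    (X : ℕ → Ω → Bool) (hmeas : ∀ i, Measurable (X i))
    (hindep : iIndepFun X μ)
    (hdist : ∀ i, μ {ω | X i ω = true} = ENNReal.ofReal q)
    (L K' : ℕ) (α : ℝ) :
    μ ((⋂ i ∈ Finset.range L, X i ⁻¹' ({false} : Set Bool)) ∩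
        {ω | ∀ r : ℕ, (∑ t ∈ Finset.range (r+1), ((X (L+t) ω).toNat : ℝ)) ≤ α * ((r+K'+1 : ℕ):ℝ)})
      = μ (⋂ i ∈ Finset.range L, X i ⁻¹' ({false} : Set Bool)) *
        μ {ω | ∀ r : ℕ, (∑ t ∈ Finset.range (r+1), ((X (L+t) ω).toNat : ℝ)) ≤ α * ((r+K'+1 : ℕ):ℝ)}
    ∧ 0 < μ (⋂ i ∈ Finset.range L, X i ⁻¹' ({false} : Set Bool)) := by
  set mc : ℕ → MeasurableSpace Ω := fun i => MeasurableSpace.comap (X i) inferInstance with hmc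
  have hXc : ∀ i, Measurable[mc i] (X i) := fun i s hs => ⟨s, hs, rfl⟩
  have hiIndep : iIndep mc μ := hindep
  have hdisj : Disjoint {i : ℕ | i < L} {i : ℕ | L ≤ i} := by
    rw [Set.disjoint_left]; intro i hi hi'
    simp only [Set.mem_setOf_eq] at hi hi'; omega
  have hIndep : Indep (⨆ i ∈ {i : ℕ | i < L}, mc i) (⨆ i ∈ {i : ℕ | L ≤ i}, mc i) μ :=
    indep_iSup_of_disjoint (fun i => (hmeas i).comap_le) hiIndep hdisj
  have hφ : Measurable (fun b : Bool => (b.toNat : ℝ)) := measurable_from_top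
  have hA1m : MeasurableSet[⨆ i ∈ {i : ℕ | i < L}, mc i]
      (⋂ i ∈ Finset.range L, X i ⁻¹' ({false} : Set Bool)) := by
    refine Finset.measurableSet_biInter _ fun i hi => ?_
    have hle : mc i ≤ ⨆ i ∈ {i : ℕ | i < L}, mc i :=
      le_iSup₂ (f := fun i (_ : i ∈ {i : ℕ | i < L}) => mc i) i (Finset.mem_range.1 hi)
    exact hle _ (hXc i (measurableSet_singleton false))
  have hA2m : MeasurableSet[⨆ i ∈ {i : ℕ | L ≤ i}, mc i]
      {ω | ∀ r : ℕ, (∑ t ∈ Finset.range (r+1), ((X (L+t) ω).toNat : ℝ)) ≤ α * ((r+K'+1 : ℕ):ℝ)} := by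
    have hXm2 : ∀ i, L ≤ i → Measurable[⨆ i ∈ {i : ℕ | L ≤ i}, mc i] (X i) := by
      intro i hi
      have hle : mc i ≤ ⨆ i ∈ {i : ℕ | L ≤ i}, mc i :=
        le_iSup₂ (f := fun i (_ : i ∈ {i : ℕ | L ≤ i}) => mc i) i hi
      exact fun s hs => hle _ (hXc i hs)
    have hsum : ∀ r : ℕ, Measurable[⨆ i ∈ {i : ℕ | L ≤ i}, mc i]
        (fun ω => ∑ t ∈ Finset.range (r+1), ((X (L+t) ω).toNat : ℝ)) := by
      intro r
      exact Finset.measurable_sum _ fun t _ => hφ.comp (hXm2 (L+t) (by omega))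
    have he : {ω | ∀ r : ℕ, (∑ t ∈ Finset.range (r+1), ((X (L+t) ω).toNat : ℝ)) ≤ α * ((r+K'+1 : ℕ):ℝ)}
        = ⋂ r : ℕ, (fun ω => ∑ t ∈ Finset.range (r+1), ((X (L+t) ω).toNat : ℝ)) ⁻¹'
            (Set.Iic (α * ((r+K'+1 : ℕ):ℝ))) := by
      ext ω; simp [Set.mem_iInter, Set.mem_preimage]
    rw [he]
    exact MeasurableSet.iInter fun r => (hsum r) measurableSet_Iic
  constructor
  · exact (hIndep.indepSet_of_measurableSet hA1m hA2m).measure_inter_eq_mul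
  · have hcompl : ∀ i, X i ⁻¹' ({false} : Set Bool) = {ω | X i ω = true}ᶜ := by
      intro i; ext ω; cases hx : X i ω <;> simp [hx]
    have hmul := hindep.measure_inter_preimage_eq_mul (Finset.range L)
      (sets := fun _ => ({false} : Set Bool)) (fun i _ => trivial)
    rw [hmul]
    rw [CanonicallyOrderedAdd.prod_pos]
    intro i _
    rw [hcompl i, measure_compl (show MeasurableSet {ω | X i ω = true} from
      hmeas i (measurableSet_singleton true)) (measure_ne_top μ _), hdist i, measure_univ]
    rw [tsub_pos_iff_lt]
    calc ENNReal.ofReal q < ENNReal.ofReal 1 := by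
          rw [ENNReal.ofReal_lt_ofReal_iff one_pos]; exact hq.2
      _ = 1 := ENNReal.ofReal_one

/-- Deterministic part: a trajectory with all-`false` initial block and controlled
shifted partial sums stays below the barrier forever. -/
lemma det_part {Ω : Type*} (X : ℕ → Ω → Bool) (b : ℕ → ℕ)
    (θ₀ α : ℝ) (hθpos : 0 < θ₀) (hα : α * (1 + θ₀) = θ₀) (hαpos : 0 < α)
    (N K' : ℕ) (hN : 1 ≤ N) (hbN : ∀ n, N ≤ n → θ₀ * n < b n) (ω : Ω)
    (h1 : ∀ i, i < N + K' → X i ω = false)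
    (h2 : ∀ r : ℕ, (∑ t ∈ Finset.range (r+1), ((X (N+K'+t) ω).toNat : ℝ))
        ≤ α * ((r+K'+1 : ℕ) : ℝ)) :
    ∀ k : ℕ, walkS X k ω ≤ b (1 + walkX X k ω).toNat := by
  set L := N + K' with hL
  intro k
  by_cases hk : k < L
  · have h0 : walkS X k ω = 0 := Finset.sum_eq_zero fun j hj => by
      rw [h1 j (by have := Finset.mem_range.1 hj; omega)]; rfl
    rw [h0]; exact Nat.zero_le _
  · push_neg at hk
    set r := k - L with hr
    set u := ∑ t ∈ Finset.range (r+1), (X (L+t) ω).toNat with hu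
    have hSu : walkS X k ω = u := by
      unfold walkS
      rw [Finset.range_eq_Ico, ← Finset.sum_Ico_consecutive _ (Nat.zero_le L) (by omega : L ≤ k+1)]
      have hz : ∑ j ∈ Finset.Ico 0 L, (X j ω).toNat = 0 := Finset.sum_eq_zero fun j hj => by
        rw [h1 j (by have := Finset.mem_Ico.1 hj; omega)]; rfl
      have hkl : k + 1 - L = r + 1 := by omega
      rw [hz, zero_add, Finset.sum_Ico_eq_sum_range, hkl, hu]
    have hu1 : u ≤ r + 1 := by
      calc u ≤ ∑ t ∈ Finset.range (r+1), 1 :=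
            Finset.sum_le_sum fun t _ => by cases X (L+t) ω <;> simp
        _ = r + 1 := by simp
    have hu2 : (u:ℝ) ≤ α * ((r+K'+1 : ℕ) : ℝ) := by
      have h := h2 r
      rw [hu]; push_cast at h ⊢; exact h
    have hk1 : (u:ℝ) ≤ α * ((k+1 : ℕ) : ℝ) := by
      refine le_trans hu2 (mul_le_mul_of_nonneg_left ?_ hαpos.le)
      exact_mod_cast (by omega : r+K'+1 ≤ k+1)
    have hum : u ≤ k := by omega
    have hwx : (1 + walkX X k ω).toNat = k + 1 - u := by
      rw [walkX, hSu]; omega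
    set m := k + 1 - u with hm
    have hmN : N ≤ m := by omega
    have hmc : ((m:ℕ):ℝ) = ((k+1 : ℕ):ℝ) - (u:ℝ) := by
      rw [hm]; push_cast [Nat.cast_sub (by omega : u ≤ k+1)]; ring
    have humθ : (u:ℝ) ≤ θ₀ * (m:ℝ) := by
      nlinarith [mul_le_mul_of_nonneg_right hk1 (by linarith : (0:ℝ) ≤ 1 + θ₀), hmc]
    have hfin : (u:ℝ) < ((b m : ℕ) : ℝ) := lt_of_le_of_lt humθ (hbN m hmN)
    have hub : u ≤ b m := (by exact_mod_cast hfin : u < b m).le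
    rw [hSu, hwx]
    exact hub

theorem stmt_14 {Ω : Type*} [MeasurableSpace Ω] (μ : Measure Ω) [IsProbabilityMeasure μ]
    (q : ℝ) (hq : q ∈ Set.Ioo (0 : ℝ) 1) (p : ℝ) (hp : p = 1 - q)
    (X : ℕ → Ω → Bool) (hmeas : ∀ i, Measurable (X i))
    (hindep : iIndepFun X μ)
    (hdist : ∀ i, μ {ω | X i ω = true} = ENNReal.ofReal q)
    (b : ℕ → ℕ) (hb : Monotone b)
    (hθ : ((q / p : ℝ) : EReal) <
      Filter.liminf (fun n : ℕ => (((b n : ℝ) / n : ℝ) : EReal)) Filter.atTop) :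
    0 < μ {ω | ∀ k : ℕ, walkS X k ω ≤ b (1 + walkX X k ω).toNat} := by
  have hq0 := hq.1
  have hq1 := hq.2
  have hp0 : 0 < p := by rw [hp]; linarith
  -- step 1: extract the slope θ₀ and the threshold N
  obtain ⟨θ₀, hθ₀, N, hN1, hbN⟩ :
      ∃ θ₀ : ℝ, q / p < θ₀ ∧ ∃ N : ℕ, 1 ≤ N ∧ ∀ n, N ≤ n → θ₀ * n < b n := by
    obtain ⟨z, hz1, hz2⟩ := exists_between hθ
    have hzt : z ≠ ⊤ := ne_top_of_lt hz2
    have hzb : z ≠ ⊥ := ne_bot_of_gt hz1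
    set θ₀ := z.toReal with hθ₀def
    have hzz : (θ₀ : EReal) = z := EReal.coe_toReal hzt hzb
    refine ⟨θ₀, by exact_mod_cast hzz ▸ hz1, ?_⟩
    have hev : ∀ᶠ n in Filter.atTop, (θ₀ : EReal) < (((b n : ℝ) / n : ℝ) : EReal) := by
      rw [hzz]; exact Filter.eventually_lt_of_lt_liminf hz2
    rw [Filter.eventually_atTop] at hev
    obtain ⟨N₀, hN₀⟩ := hev
    refine ⟨max N₀ 1, le_max_right _ _, fun n hn => ?_⟩
    have h1 : θ₀ < (b n : ℝ) / n := by exact_mod_cast hN₀ n (le_trans (le_max_left _ _) hn)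
    have hn1 : (1:ℝ) ≤ n := by exact_mod_cast le_trans (le_max_right _ _) hn
    calc θ₀ * n < ((b n : ℝ) / n) * n := by
          apply mul_lt_mul_of_pos_right h1; linarith
      _ = b n := by field_simp
  have hθpos : 0 < θ₀ := lt_trans (div_pos hq0 hp0) hθ₀
  have h1θ : (0:ℝ) < 1 + θ₀ := by linarith
  set α := θ₀ / (1 + θ₀) with hαdef
  have hα : α * (1 + θ₀) = θ₀ := div_mul_cancel₀ _ (ne_of_gt h1θ)
  have hαpos : 0 < α := div_pos hθpos h1θ
  have hqα : q < α := by
    rw [hαdef, lt_div_iff₀ h1θ]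
    have hq' : q < θ₀ * p := (div_lt_iff₀ hp0).1 hθ₀
    rw [hp] at hq'
    nlinarith
  -- step 2: SLLN with shift N
  obtain ⟨K', hK'⟩ := slln_part μ q hq X hmeas hindep hdist N α hqα
  -- step 3: independence of the blocks
  obtain ⟨hmul, hA1pos⟩ := indep_part μ q hq X hmeas hindep hdist (N + K') K' α
  -- the B event is contained in the A₂ event
  have hBsub : {ω | ∀ j, K' ≤ j →
        (∑ i ∈ Finset.range (j+1), ((X (N+i) ω).toNat : ℝ)) ≤ α * ((j+1 : ℕ) : ℝ)}
      ⊆ {ω | ∀ r : ℕ, (∑ t ∈ Finset.range (r+1), ((X (N+K'+t) ω).toNat : ℝ))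
          ≤ α * ((r+K'+1 : ℕ):ℝ)} := by
    intro ω hω r
    have hj := hω (r + K') (by omega)
    have hsum : (∑ t ∈ Finset.range (r+1), ((X (N+K'+t) ω).toNat : ℝ))
        = ∑ i ∈ Finset.Ico K' (r+K'+1), ((X (N+i) ω).toNat : ℝ) := by
      rw [Finset.sum_Ico_eq_sum_range]
      have h' : r+K'+1-K' = r+1 := by omega
      rw [h']
      refine Finset.sum_congr rfl fun t _ => ?_
      rw [show N + (K' + t) = N + K' + t by omega]
    have hle : (∑ i ∈ Finset.Ico K' (r+K'+1), ((X (N+i) ω).toNat : ℝ))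
        ≤ ∑ i ∈ Finset.range (r+K'+1), ((X (N+i) ω).toNat : ℝ) := by
      refine Finset.sum_le_sum_of_subset_of_nonneg ?_ (fun i _ _ => by positivity)
      intro x hx
      rw [Finset.mem_range]
      have := Finset.mem_Ico.1 hx
      omega
    calc (∑ t ∈ Finset.range (r+1), ((X (N+K'+t) ω).toNat : ℝ))
        = ∑ i ∈ Finset.Ico K' (r+K'+1), ((X (N+i) ω).toNat : ℝ) := hsum
      _ ≤ ∑ i ∈ Finset.range (r+K'+1), ((X (N+i) ω).toNat : ℝ) := hle
      _ ≤ α * ((r+K'+1 : ℕ):ℝ) := hj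
  have hA2pos : 0 < μ {ω | ∀ r : ℕ, (∑ t ∈ Finset.range (r+1),
      ((X (N+K'+t) ω).toNat : ℝ)) ≤ α * ((r+K'+1 : ℕ):ℝ)} :=
    lt_of_lt_of_le hK' (measure_mono hBsub)
  have hpos : 0 < μ ((⋂ i ∈ Finset.range (N+K'), X i ⁻¹' ({false} : Set Bool)) ∩
      {ω | ∀ r : ℕ, (∑ t ∈ Finset.range (r+1), ((X (N+K'+t) ω).toNat : ℝ))
        ≤ α * ((r+K'+1 : ℕ):ℝ)}) := by
    rw [hmul]
    exact ENNReal.mul_pos hA1pos.ne' hA2pos.ne'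
  refine lt_of_lt_of_le hpos (measure_mono ?_)
  rintro ω ⟨hω1, hω2⟩
  refine det_part X b θ₀ α hθpos hα hαpos N K' hN1 hbN ω ?_ hω2
  intro i hi
  have := Set.mem_iInter₂.1 hω1 i (Finset.mem_range.2 hi)
  exact this
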